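/- The bivariate exponential generating function P(x,y) = sum_{n≥0} sum_{k=-n}^{n} 2^n p_n(k) x^{n+k} y^{n-k} / ((n+k)! (n-k)!) satisfies the PDE (∂/∂x - ∂/∂y)^2 P = 4P, as an identity of formal power series in two variables. -/

import Mathlib

noncomputable def p : ℕ → ℤ → ℤ
  | 0, k => if k = 0 then 1 else 0
  | n + 1, k => ∑ j ∈ Finset.Icc (-(n : ℤ)) (n : ℤ), |j - k| * p n j

/-- `a i j` is the EGF coefficient array of
`P(x,y) = ∑_{n,k} 2^n p_n(k) x^{n+k} y^{n-k}/((n+k)!(n-k)!)`,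
i.e. `a i j = i! j! [x^i y^j] P`: it equals `2^n p_n(k)` when
`i = n + k`, `j = n - k`, and `0` when `i + j` is odd. -/
noncomputable def aP (i j : ℕ) : ℤ :=
  if (i + j) % 2 = 0 then 2 ^ ((i + j) / 2) * p ((i + j) / 2) (((i : ℤ) - (j : ℤ)) / 2) else 0

lemma p_second_diff (n : ℕ) (k : ℤ) (h1 : -(n : ℤ) ≤ k) (h2 : k ≤ n) :
    p (n + 1) (k + 1) - 2 * p (n + 1) k + p (n + 1) (k - 1) = 2 * p n k := by
  show (∑ j ∈ Finset.Icc (-(n : ℤ)) (n : ℤ), |j - (k + 1)| * p n j)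
      - 2 * (∑ j ∈ Finset.Icc (-(n : ℤ)) (n : ℤ), |j - k| * p n j)
      + (∑ j ∈ Finset.Icc (-(n : ℤ)) (n : ℤ), |j - (k - 1)| * p n j) = 2 * p n k
  rw [Finset.mul_sum, ← Finset.sum_sub_distrib, ← Finset.sum_add_distrib]
  have : ∀ j ∈ Finset.Icc (-(n : ℤ)) (n : ℤ),
      |j - (k + 1)| * p n j - 2 * (|j - k| * p n j) + |j - (k - 1)| * p n j
        = (if j = k then 2 * p n j else 0) := by
    intro j _
    by_cases hj : j = k
    · subst hj
      have e1 : |j - (j + 1)| = 1 := by rw [Int.abs_eq_natAbs]; norm_num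
      have e2 : |j - j| = 0 := by simp
      have e3 : |j - (j - 1)| = 1 := by rw [Int.abs_eq_natAbs]; norm_num
      rw [if_pos rfl, e1, e2, e3]; ring
    · rw [if_neg hj]
      have e : |j - (k + 1)| - 2 * |j - k| + |j - (k - 1)| = 0 := by
        rw [Int.abs_eq_natAbs, Int.abs_eq_natAbs, Int.abs_eq_natAbs]; omega
      have : (|j - (k + 1)| - 2 * |j - k| + |j - (k - 1)|) * p n j = 0 := by
        rw [e]; ring
      linear_combination this
  rw [Finset.sum_congr rfl this, Finset.sum_ite_eq' (Finset.Icc (-(n : ℤ)) (n : ℤ)) k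
    (fun j => 2 * p n j), if_pos (Finset.mem_Icc.mpr ⟨h1, h2⟩)]

/-- The PDE `(∂/∂x - ∂/∂y)^2 P = 4 P`, stated coefficient-wise for the EGF
coefficients: `a (i+2) j - 2 a (i+1) (j+1) + a i (j+2) = 4 a i j`. -/
theorem P_pde (i j : ℕ) :
    aP (i + 2) j - 2 * aP (i + 1) (j + 1) + aP i (j + 2) = 4 * aP i j := by
  by_cases h : (i + j) % 2 = 0
  · have h1 : (i + 2 + j) % 2 = 0 := by omega
    have h2 : (i + 1 + (j + 1)) % 2 = 0 := by omega
    have h3 : (i + (j + 2)) % 2 = 0 := by omega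
    set n := (i + j) / 2 with hn
    have d1 : (i + 2 + j) / 2 = n + 1 := by omega
    have d2 : (i + 1 + (j + 1)) / 2 = n + 1 := by omega
    have d3 : (i + (j + 2)) / 2 = n + 1 := by omega
    set k : ℤ := ((i : ℤ) - (j : ℤ)) / 2 with hk
    have hdvd : (2 : ℤ) ∣ ((i : ℤ) - (j : ℤ)) := by omega
    have k1 : ((i : ℤ) + 2 - (j : ℤ)) / 2 = k + 1 := by omega
    have k2 : ((i : ℤ) + 1 - ((j : ℤ) + 1)) / 2 = k := by omega
    have k3 : ((i : ℤ) - ((j : ℤ) + 2)) / 2 = k - 1 := by omega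
    have hb1 : -(n : ℤ) ≤ k := by omega
    have hb2 : k ≤ (n : ℤ) := by omega
    simp only [aP, if_pos h1, if_pos h2, if_pos h3, if_pos h, d1, d2, d3]
    push_cast
    rw [k1, k2, k3]
    have key := p_second_diff n k hb1 hb2
    rw [← hn]
    ring_nf
    ring_nf at key
    linear_combination (2 : ℤ) ^ (n + 1) * key
  · have h1 : ¬ (i + 2 + j) % 2 = 0 := by omega
    have h2 : ¬ (i + 1 + (j + 1)) % 2 = 0 := by omega
    have h3 : ¬ (i + (j + 2)) % 2 = 0 := by omega
    simp [aP, h, h1, h2, h3]
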